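/- Let $c>0$ and let $X:(0,\infty)\to[0,\infty)$ be differentiable with $X'(t)\le 0$ and $\frac{d}{dt}(e^{ct}X(t))\le 0$ for all $t>0$. For $p\ge 0$ define $Y_p(0)=-\int_0^\infty r^p\,dX(r)$ (Riemann–Stieltjes integral). Then for all $0\le p_1<p_2<\infty$, $\frac{c^{p_2}Y_{p_2}(0)}{\Gamma(p_2+1)}\le \frac{c^{p_1}Y_{p_1}(0)}{\Gamma(p_1+1)}$. -/

import Mathlib

open MeasureTheory Set Filter
open scoped ENNReal

private lemma rearrange_aux {a b cc d : ℝ≥0∞} (hab : a ≤ b) (hdc : d ≤ cc) :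
    a * cc + b * d ≤ a * d + b * cc := by
  obtain ⟨e, rfl⟩ : ∃ e, b = a + e := ⟨b - a, (add_tsub_cancel_of_le hab).symm⟩
  calc a * cc + (a + e) * d = a * d + (a * cc + e * d) := by ring
    _ ≤ a * d + (a * cc + e * cc) := by gcongr
    _ = a * d + (a + e) * cc := by ring

private lemma cheby {α : Type*} [MeasurableSpace α] (μ : Measure α)
    (w f g : α → ℝ≥0∞)
    (hw : AEMeasurable w μ) (hf : AEMeasurable f μ) (hg : AEMeasurable g μ)
    (hmono : ∀ᵐ u ∂μ, ∀ᵐ v ∂μ,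
      f u * g u + f v * g v ≤ f u * g v + f v * g u) :
    (∫⁻ u, w u ∂μ) * (∫⁻ u, w u * f u * g u ∂μ) ≤
      (∫⁻ u, w u * f u ∂μ) * (∫⁻ u, w u * g u ∂μ) := by
  set A := ∫⁻ u, w u ∂μ with hA
  set B := ∫⁻ u, w u * f u * g u ∂μ with hB
  set C := ∫⁻ u, w u * f u ∂μ with hC
  set D := ∫⁻ u, w u * g u ∂μ with hD
  have hwfg : AEMeasurable (fun v => w v * f v * g v) μ := (hw.mul hf).mul hg
  have h1 : (∫⁻ u, ∫⁻ v, w u * w v * (f u * g u + f v * g v) ∂μ ∂μ) = 2 * (A * B) := by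
    have inner : ∀ u, (∫⁻ v, w u * w v * (f u * g u + f v * g v) ∂μ)
        = (w u * f u * g u) * A + w u * B := by
      intro u
      calc (∫⁻ v, w u * w v * (f u * g u + f v * g v) ∂μ)
          = ∫⁻ v, ((w u * f u * g u) * w v + (w u) * (w v * f v * g v)) ∂μ := by
            refine lintegral_congr fun v => by ring
        _ = (w u * f u * g u) * A + w u * B := by
            rw [lintegral_add_left' (hw.const_mul _), lintegral_const_mul'' _ hw,
              lintegral_const_mul'' _ hwfg]
    simp_rw [inner]
    rw [lintegral_add_left' (hwfg.mul_const _), lintegral_mul_const'' _ hwfg,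
      lintegral_mul_const'' _ hw]
    ring
  have h2 : (∫⁻ u, ∫⁻ v, w u * w v * (f u * g v + f v * g u) ∂μ ∂μ) = 2 * (C * D) := by
    have inner : ∀ u, (∫⁻ v, w u * w v * (f u * g v + f v * g u) ∂μ)
        = (w u * f u) * D + (w u * g u) * C := by
      intro u
      calc (∫⁻ v, w u * w v * (f u * g v + f v * g u) ∂μ)
          = ∫⁻ v, ((w u * f u) * (w v * g v) + (w u * g u) * (w v * f v)) ∂μ := by
            refine lintegral_congr fun v => by ring
        _ = (w u * f u) * D + (w u * g u) * C := by
            rw [lintegral_add_left' (show AEMeasurable (fun v => w u * f u * (w v * g v)) μ from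
                (hw.mul hg).const_mul _),
              lintegral_const_mul'' _ (show AEMeasurable (fun v => w v * g v) μ from hw.mul hg),
              lintegral_const_mul'' _ (show AEMeasurable (fun v => w v * f v) μ from hw.mul hf)]
    simp_rw [inner]
    rw [lintegral_add_left' (show AEMeasurable (fun u => w u * f u * D) μ from
        (hw.mul hf).mul_const _),
      lintegral_mul_const'' _ (show AEMeasurable (fun u => w u * f u) μ from hw.mul hf),
      lintegral_mul_const'' _ (show AEMeasurable (fun u => w u * g u) μ from hw.mul hg)]
    ring
  have hmid : (∫⁻ u, ∫⁻ v, w u * w v * (f u * g u + f v * g v) ∂μ ∂μ)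
      ≤ ∫⁻ u, ∫⁻ v, w u * w v * (f u * g v + f v * g u) ∂μ ∂μ := by
    refine lintegral_mono_ae ?_
    filter_upwards [hmono] with u hu
    refine lintegral_mono_ae ?_
    filter_upwards [hu] with v hv
    exact mul_le_mul_right hv _
  have key : 2 * (A * B) ≤ 2 * (C * D) := by rw [← h1, ← h2]; exact hmid
  exact (ENNReal.mul_le_mul_iff_right (two_ne_zero) (ENNReal.ofNat_ne_top)).1 key

private lemma lint_gamma {a r : ℝ} (ha : 0 < a) (hr : 0 < r) :
    ∫⁻ t in Ioi (0:ℝ), ENNReal.ofReal (t ^ (a-1) * Real.exp (-(r*t))) =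
      ENNReal.ofReal ((1/r) ^ a * Real.Gamma a) := by
  rw [← Real.integral_rpow_mul_exp_neg_mul_Ioi ha hr,
    ← MeasureTheory.ofReal_integral_eq_lintegral_ofReal]
  · simpa [Real.rpow_one, neg_mul, IntegrableOn] using
      integrableOn_rpow_mul_exp_neg_mul_rpow (by linarith : (-1:ℝ) < a - 1) one_pos hr
  · filter_upwards [ae_restrict_mem measurableSet_Ioi] with t ht
    exact mul_nonneg (Real.rpow_nonneg (le_of_lt ht) _) (Real.exp_pos _).le

/-- Optimal monotonicity (basic form): if `X : (0,∞) → [0,∞)` is differentiable with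
`X' ≤ 0` and `(e^{ct}X(t))' ≤ 0`, and `Y p = -∫₀^∞ r^p dX(r)` (Riemann–Stieltjes,
equal to `p ∫₀^∞ r^{p-1} X(r) dr` for `p > 0` and to `X(0⁺)` for `p = 0`), then
`p ↦ c^p Y p / Γ(p+1)` is nonincreasing on `[0,∞)`. -/
theorem stmt0 (c : ℝ) (hc : 0 < c) (X : ℝ → ℝ)
    (hXpos : ∀ t > 0, 0 ≤ X t)
    (hXdiff : ∀ t > 0, DifferentiableAt ℝ X t)
    (hX' : ∀ t > 0, deriv X t ≤ 0)
    (hXe : ∀ t > 0, deriv (fun s => Real.exp (c * s) * X s) t ≤ 0)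
    (Y : ℝ → ℝ≥0∞)
    (hY : ∀ p > (0 : ℝ),
      Y p = ENNReal.ofReal p * ∫⁻ r in Ioi (0 : ℝ), ENNReal.ofReal (r ^ (p - 1) * X r))
    (hY0 : Tendsto (fun t => ENNReal.ofReal (X t)) (nhdsWithin 0 (Ioi 0)) (nhds (Y 0)))
    (p₁ p₂ : ℝ) (hp₁ : 0 ≤ p₁) (hp₁₂ : p₁ < p₂) :
    ENNReal.ofReal (c ^ p₂ / Real.Gamma (p₂ + 1)) * Y p₂ ≤
      ENNReal.ofReal (c ^ p₁ / Real.Gamma (p₁ + 1)) * Y p₁ := by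
  have hp2 : 0 < p₂ := lt_of_le_of_lt hp₁ hp₁₂
  -- differentiability of e^{cs} X s on (0,∞)
  have hdiffE : ∀ t ∈ Ioi (0:ℝ), DifferentiableAt ℝ (fun s => Real.exp (c * s) * X s) t :=
    fun t ht => ((differentiableAt_fun_id.const_mul c).exp).mul (hXdiff t ht)
  -- e^{cs} X s is antitone on (0,∞)
  have hE : AntitoneOn (fun s => Real.exp (c * s) * X s) (Ioi 0) := by
    refine antitoneOn_of_deriv_nonpos (convex_Ioi 0)
      (fun t ht => (hdiffE t ht).continuousAt.continuousWithinAt) ?_ ?_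
    · rw [interior_Ioi]
      exact fun t ht => (hdiffE t ht).differentiableWithinAt
    · rw [interior_Ioi]
      exact fun t ht => hXe t ht
  -- pointwise exponential bound
  have hbound : ∀ s t : ℝ, 0 < s → s ≤ t → X t ≤ Real.exp (c * s - c * t) * X s := by
    intro s t hs hst
    have ht : (0:ℝ) < t := lt_of_lt_of_le hs hst
    have h1 : Real.exp (c * t) * X t ≤ Real.exp (c * s) * X s := hE hs ht hst
    rw [Real.exp_sub, div_mul_eq_mul_div, le_div_iff₀ (Real.exp_pos _), mul_comm]
    exact h1
  -- continuity / measurability of X on (0,∞)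
  have hXaem : AEMeasurable X (volume.restrict (Ioi (0:ℝ))) := by
    refine ContinuousOn.aemeasurable (fun t ht => ?_) measurableSet_Ioi
    exact (hXdiff t ht).continuousAt.continuousWithinAt
  rcases eq_or_lt_of_le hp₁ with hp0 | hp1pos
  · -- case p₁ = 0
    subst hp0
    -- X u ≤ e^{-cu} X(0⁺)
    have hXb : ∀ u : ℝ, 0 < u →
        ENNReal.ofReal (X u) ≤ ENNReal.ofReal (Real.exp (-(c * u))) * Y 0 := by
      intro u hu
      have hcont : Continuous fun s : ℝ => ENNReal.ofReal (Real.exp (c * s - c * u)) :=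
        ENNReal.continuous_ofReal.comp (Real.continuous_exp.comp (by continuity))
      have hlim : Tendsto (fun s => ENNReal.ofReal (Real.exp (c * s - c * u)) *
          ENNReal.ofReal (X s)) (nhdsWithin 0 (Ioi 0))
          (nhds (ENNReal.ofReal (Real.exp (-(c * u))) * Y 0)) := by
        refine ENNReal.Tendsto.mul ?_ (Or.inl ?_) hY0 (Or.inr ENNReal.ofReal_ne_top)
        · have h := (hcont.tendsto 0).mono_left
            (nhdsWithin_le_nhds : nhdsWithin (0:ℝ) (Ioi 0) ≤ nhds 0)
          simpa using h
        · exact (ENNReal.ofReal_pos.mpr (Real.exp_pos _)).ne'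
      refine ge_of_tendsto hlim ?_
      filter_upwards [Ioo_mem_nhdsGT_of_mem (⟨le_refl (0:ℝ), hu⟩ : (0:ℝ) ∈ Ico (0:ℝ) u)]
        with s hs
      calc ENNReal.ofReal (X u)
          ≤ ENNReal.ofReal (Real.exp (c * s - c * u) * X s) :=
            ENNReal.ofReal_le_ofReal (hbound s u hs.1 hs.2.le)
        _ = _ := ENNReal.ofReal_mul (Real.exp_pos _).le
    have hw2meas : Measurable fun u : ℝ =>
        ENNReal.ofReal (u ^ (p₂ - 1) * Real.exp (-(c * u))) := by fun_prop
    have hI2 : (∫⁻ r in Ioi (0:ℝ), ENNReal.ofReal (r ^ (p₂ - 1) * X r))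
        ≤ ENNReal.ofReal ((1/c) ^ p₂ * Real.Gamma p₂) * Y 0 := by
      have hptw : ∀ᵐ u ∂(volume.restrict (Ioi (0:ℝ))),
          ENNReal.ofReal (u ^ (p₂ - 1) * X u)
            ≤ ENNReal.ofReal (u ^ (p₂ - 1) * Real.exp (-(c * u))) * Y 0 := by
        filter_upwards [ae_restrict_mem measurableSet_Ioi] with u hu
        calc ENNReal.ofReal (u ^ (p₂ - 1) * X u)
            = ENNReal.ofReal (u ^ (p₂ - 1)) * ENNReal.ofReal (X u) :=
              ENNReal.ofReal_mul (Real.rpow_nonneg (le_of_lt hu) _)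
          _ ≤ ENNReal.ofReal (u ^ (p₂ - 1)) *
              (ENNReal.ofReal (Real.exp (-(c * u))) * Y 0) :=
              mul_le_mul_right (hXb u hu) _
          _ = ENNReal.ofReal (u ^ (p₂ - 1) * Real.exp (-(c * u))) * Y 0 := by
              rw [← mul_assoc, ← ENNReal.ofReal_mul (Real.rpow_nonneg (le_of_lt hu) _)]
      calc (∫⁻ r in Ioi (0:ℝ), ENNReal.ofReal (r ^ (p₂ - 1) * X r))
          ≤ ∫⁻ u in Ioi (0:ℝ),
              ENNReal.ofReal (u ^ (p₂ - 1) * Real.exp (-(c * u))) * Y 0 :=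
            lintegral_mono_ae hptw
        _ = (∫⁻ u in Ioi (0:ℝ),
              ENNReal.ofReal (u ^ (p₂ - 1) * Real.exp (-(c * u)))) * Y 0 :=
            lintegral_mul_const _ hw2meas
        _ = ENNReal.ofReal ((1/c) ^ p₂ * Real.Gamma p₂) * Y 0 := by
            rw [lint_gamma hp2 hc]
    have hcollapse : ENNReal.ofReal (c ^ p₂ / Real.Gamma (p₂ + 1)) *
        (ENNReal.ofReal p₂ * (ENNReal.ofReal ((1/c) ^ p₂ * Real.Gamma p₂) * Y 0)) = Y 0 := by
      rw [← mul_assoc, ← mul_assoc, ← ENNReal.ofReal_mul (by positivity),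
        ← ENNReal.ofReal_mul (by positivity)]
      have hG : Real.Gamma (p₂ + 1) = p₂ * Real.Gamma p₂ := Real.Gamma_add_one (ne_of_gt hp2)
      have hone : c ^ p₂ / Real.Gamma (p₂ + 1) * p₂ * ((1/c) ^ p₂ * Real.Gamma p₂) = 1 := by
        rw [hG, one_div, Real.inv_rpow hc.le]
        have h1 : Real.Gamma p₂ ≠ 0 := (Real.Gamma_pos_of_pos hp2).ne'
        have h2 : c ^ p₂ ≠ 0 := (Real.rpow_pos_of_pos hc _).ne'
        field_simp
      rw [hone, ENNReal.ofReal_one, one_mul]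
    have hRHS : ENNReal.ofReal (c ^ (0:ℝ) / Real.Gamma (0 + 1)) = 1 := by
      rw [Real.rpow_zero, zero_add, Real.Gamma_one]
      norm_num
    rw [hY p₂ hp2, hRHS, one_mul]
    calc ENNReal.ofReal (c ^ p₂ / Real.Gamma (p₂ + 1)) *
          (ENNReal.ofReal p₂ * ∫⁻ r in Ioi (0:ℝ), ENNReal.ofReal (r ^ (p₂ - 1) * X r))
        ≤ ENNReal.ofReal (c ^ p₂ / Real.Gamma (p₂ + 1)) *
          (ENNReal.ofReal p₂ * (ENNReal.ofReal ((1/c) ^ p₂ * Real.Gamma p₂) * Y 0)) :=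
          mul_le_mul_right (mul_le_mul_right hI2 _) _
      _ = Y 0 := hcollapse
  · -- case 0 < p₁
    set q := p₂ - p₁ with hq
    have hqpos : 0 < q := by simp [hq]; linarith
    set μr := volume.restrict (Ioi (0:ℝ)) with hμr
    set w : ℝ → ℝ≥0∞ := fun u => ENNReal.ofReal (u ^ (p₁ - 1) * Real.exp (-(c * u))) with hw
    set f : ℝ → ℝ≥0∞ := fun u => ENNReal.ofReal (u ^ q) with hf
    set g : ℝ → ℝ≥0∞ := fun u => ENNReal.ofReal (Real.exp (c * u) * X u) with hg
    have hwm : AEMeasurable w μr := by fun_prop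
    have hfm : AEMeasurable f μr := by fun_prop
    have hgm : AEMeasurable g μr := by
      refine ENNReal.measurable_ofReal.comp_aemeasurable ?_
      exact ((Real.continuous_exp.comp (continuous_const.mul continuous_id)).aemeasurable).mul hXaem
    have hmono : ∀ᵐ u ∂μr, ∀ᵐ v ∂μr,
        f u * g u + f v * g v ≤ f u * g v + f v * g u := by
      filter_upwards [ae_restrict_mem measurableSet_Ioi] with u hu
      filter_upwards [ae_restrict_mem measurableSet_Ioi] with v hv
      rcases le_total u v with huv | hvu
      · have hfle : f u ≤ f v :=
          ENNReal.ofReal_le_ofReal (Real.rpow_le_rpow (le_of_lt hu) huv hqpos.le)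
        have hgle : g v ≤ g u := ENNReal.ofReal_le_ofReal (hE hu (hu.trans_le huv) huv)
        exact rearrange_aux hfle hgle
      · have hfle : f v ≤ f u :=
          ENNReal.ofReal_le_ofReal (Real.rpow_le_rpow (le_of_lt hv) hvu hqpos.le)
        have hgle : g u ≤ g v := ENNReal.ofReal_le_ofReal (hE hv (hv.trans_le hvu) hvu)
        have h := rearrange_aux hfle hgle
        calc f u * g u + f v * g v = f v * g v + f u * g u := add_comm _ _
          _ ≤ f v * g u + f u * g v := h
          _ = f u * g v + f v * g u := add_comm _ _
    have hch := cheby μr w f g hwm hfm hgm hmono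
    -- identify the four integrals
    have hIw : (∫⁻ u, w u ∂μr) = ENNReal.ofReal ((1/c) ^ p₁ * Real.Gamma p₁) :=
      lint_gamma hp1pos hc
    have hIwf : (∫⁻ u, w u * f u ∂μr) = ENNReal.ofReal ((1/c) ^ p₂ * Real.Gamma p₂) := by
      rw [← lint_gamma hp2 hc]
      refine lintegral_congr_ae ?_
      filter_upwards [ae_restrict_mem measurableSet_Ioi] with u hu
      have hnn1 : 0 ≤ u ^ (p₁ - 1) * Real.exp (-(c * u)) :=
        mul_nonneg (Real.rpow_nonneg (le_of_lt hu) _) (Real.exp_pos _).le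
      have hpow : u ^ (p₁ - 1) * u ^ q = u ^ (p₂ - 1) := by
        rw [← Real.rpow_add hu]
        congr 1
        rw [hq]; ring
      rw [hw, hf, ← ENNReal.ofReal_mul hnn1]
      congr 1
      calc u ^ (p₁ - 1) * Real.exp (-(c * u)) * u ^ q
          = u ^ (p₁ - 1) * u ^ q * Real.exp (-(c * u)) := by ring
        _ = u ^ (p₂ - 1) * Real.exp (-(c * u)) := by rw [hpow]
    have hIwg : (∫⁻ u, w u * g u ∂μr)
        = ∫⁻ r in Ioi (0:ℝ), ENNReal.ofReal (r ^ (p₁ - 1) * X r) := by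
      refine lintegral_congr_ae ?_
      filter_upwards [ae_restrict_mem measurableSet_Ioi] with u hu
      have hnn1 : 0 ≤ u ^ (p₁ - 1) * Real.exp (-(c * u)) :=
        mul_nonneg (Real.rpow_nonneg (le_of_lt hu) _) (Real.exp_pos _).le
      have hexp : Real.exp (-(c * u)) * Real.exp (c * u) = 1 := by
        rw [← Real.exp_add]; simp
      rw [hw, hg, ← ENNReal.ofReal_mul hnn1]
      congr 1
      calc u ^ (p₁ - 1) * Real.exp (-(c * u)) * (Real.exp (c * u) * X u)
          = u ^ (p₁ - 1) * (Real.exp (-(c * u)) * Real.exp (c * u)) * X u := by ring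
        _ = u ^ (p₁ - 1) * X u := by rw [hexp, mul_one]
    have hIwfg : (∫⁻ u, w u * f u * g u ∂μr)
        = ∫⁻ r in Ioi (0:ℝ), ENNReal.ofReal (r ^ (p₂ - 1) * X r) := by
      refine lintegral_congr_ae ?_
      filter_upwards [ae_restrict_mem measurableSet_Ioi] with u hu
      have hnn1 : 0 ≤ u ^ (p₁ - 1) * Real.exp (-(c * u)) :=
        mul_nonneg (Real.rpow_nonneg (le_of_lt hu) _) (Real.exp_pos _).le
      have hnn2 : 0 ≤ u ^ (p₁ - 1) * Real.exp (-(c * u)) * u ^ q :=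
        mul_nonneg hnn1 (Real.rpow_nonneg (le_of_lt hu) _)
      have hpow : u ^ (p₁ - 1) * u ^ q = u ^ (p₂ - 1) := by
        rw [← Real.rpow_add hu]
        congr 1
        rw [hq]; ring
      have hexp : Real.exp (-(c * u)) * Real.exp (c * u) = 1 := by
        rw [← Real.exp_add]; simp
      rw [hw, hf, hg, ← ENNReal.ofReal_mul hnn1, ← ENNReal.ofReal_mul hnn2]
      congr 1
      calc u ^ (p₁ - 1) * Real.exp (-(c * u)) * u ^ q * (Real.exp (c * u) * X u)
          = u ^ (p₁ - 1) * u ^ q * (Real.exp (-(c * u)) * Real.exp (c * u)) * X u := by ring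
        _ = u ^ (p₂ - 1) * X u := by rw [hpow, hexp, mul_one]
    rw [hIw, hIwf, hIwg, hIwfg] at hch
    -- multiply both sides by k
    have hGp1 : (0:ℝ) < Real.Gamma p₁ := Real.Gamma_pos_of_pos hp1pos
    have hGp2 : (0:ℝ) < Real.Gamma p₂ := Real.Gamma_pos_of_pos hp2
    have hcp1 : (0:ℝ) < c ^ p₁ := Real.rpow_pos_of_pos hc _
    have hcp2 : (0:ℝ) < c ^ p₂ := Real.rpow_pos_of_pos hc _
    set k := ENNReal.ofReal (c ^ p₁ * c ^ p₂ / (Real.Gamma p₁ * Real.Gamma p₂)) with hk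
    have h := mul_le_mul_right hch k
    rw [← mul_assoc, ← mul_assoc, hk, ← ENNReal.ofReal_mul (by positivity),
      ← ENNReal.ofReal_mul (by positivity)] at h
    have e1 : c ^ p₁ * c ^ p₂ / (Real.Gamma p₁ * Real.Gamma p₂) *
        ((1/c) ^ p₁ * Real.Gamma p₁) = c ^ p₂ / Real.Gamma p₂ := by
      rw [one_div, Real.inv_rpow hc.le]
      field_simp
    have e2 : c ^ p₁ * c ^ p₂ / (Real.Gamma p₁ * Real.Gamma p₂) *
        ((1/c) ^ p₂ * Real.Gamma p₂) = c ^ p₁ / Real.Gamma p₁ := by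
      rw [one_div, Real.inv_rpow hc.le]
      field_simp
    rw [e1, e2] at h
    -- rewrite the goal in the same shape
    rw [hY p₁ hp1pos, hY p₂ hp2]
    have hsh : ∀ p : ℝ, 0 < p → ∀ I : ℝ≥0∞,
        ENNReal.ofReal (c ^ p / Real.Gamma (p + 1)) * (ENNReal.ofReal p * I)
          = ENNReal.ofReal (c ^ p / Real.Gamma p) * I := by
      intro p hp I
      rw [← mul_assoc, ← ENNReal.ofReal_mul (by positivity)]
      congr 2
      rw [Real.Gamma_add_one hp.ne']
      have h1 : Real.Gamma p ≠ 0 := (Real.Gamma_pos_of_pos hp).ne'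
      field_simp
    rw [hsh p₁ hp1pos, hsh p₂ hp2]
    exact h
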